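/- Let n ≥ 2 and let φ : ℝⁿ ∖ {0} → ℝ be a C¹ function homogeneous of degree 0. Let ω ∈ ℝⁿ with |ω| = 1 and x₀ ∈ ℝⁿ with x₀ ≠ 0 and x₀·ω = 0. Then the function s ↦ ∇φ(x₀ + sω)·ω is integrable on ℝ and ∫_{−∞}^{∞} ∇φ(x₀ + sω)·ω ds = φ(ω) − φ(−ω). -/

import Mathlib

open Real MeasureTheory RealInnerProductSpace Set Filter

set_option maxHeartbeats 1000000 in
/-- For a `C¹` function `φ` on `ℝⁿ \ {0}` homogeneous of degree `0`, the line integral of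
`∇φ ⬝ ω` along the line `x₀ + sω` (with `x₀ ≠ 0`, `x₀ ⬝ ω = 0`, `|ω| = 1`) converges and
equals `φ(ω) − φ(−ω)`. -/
theorem line_integral_of_gradient_of_homogeneous
    (n : ℕ) (hn : 2 ≤ n)
    (φ : EuclideanSpace ℝ (Fin n) → ℝ)
    (hφ : ContDiffOn ℝ 1 φ {0}ᶜ)
    (hφhom : ∀ t : ℝ, 0 < t → ∀ x : EuclideanSpace ℝ (Fin n), x ≠ 0 → φ (t • x) = φ x)
    (ω x₀ : EuclideanSpace ℝ (Fin n)) (hω : ‖ω‖ = 1) (hx₀ : x₀ ≠ 0)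
    (hperp : ⟪x₀, ω⟫ = 0) :
    Integrable (fun s : ℝ => ⟪gradient φ (x₀ + s • ω), ω⟫) ∧
    (∫ s : ℝ, ⟪gradient φ (x₀ + s • ω), ω⟫) = φ ω - φ (-ω) := by
  have hopen : IsOpen ({0}ᶜ : Set (EuclideanSpace ℝ (Fin n))) := isOpen_compl_singleton
  have hdiff : ∀ y : EuclideanSpace ℝ (Fin n), y ≠ 0 → DifferentiableAt ℝ φ y := fun y hy =>
    (hφ.contDiffAt (hopen.mem_nhds hy)).differentiableAt one_ne_zero
  have hinner : ∀ (y v : EuclideanSpace ℝ (Fin n)), ⟪gradient φ y, v⟫ = fderiv ℝ φ y v :=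
    fun y v => InnerProductSpace.toDual_symm_apply
  -- scaling of the derivative
  have hscale : ∀ (y : EuclideanSpace ℝ (Fin n)), y ≠ 0 → ∀ t : ℝ, 0 < t →
      ∀ v, fderiv ℝ φ y v = t * fderiv ℝ φ (t • y) v := by
    intro y hy t ht v
    have hty : t • y ≠ 0 := smul_ne_zero (ne_of_gt ht) hy
    have hmap : HasFDerivAt (fun x : EuclideanSpace ℝ (Fin n) => t • x)
        (t • ContinuousLinearMap.id ℝ (EuclideanSpace ℝ (Fin n))) y :=
      (hasFDerivAt_id y).const_smul t
    have h1 : HasFDerivAt (fun x : EuclideanSpace ℝ (Fin n) => φ (t • x))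
        ((fderiv ℝ φ (t • y)).comp (t • ContinuousLinearMap.id ℝ (EuclideanSpace ℝ (Fin n)))) y :=
      (hdiff _ hty).hasFDerivAt.comp y hmap
    have heq : (fun x : EuclideanSpace ℝ (Fin n) => φ (t • x)) =ᶠ[nhds y] φ := by
      filter_upwards [hopen.mem_nhds hy] with x hx
      exact hφhom t ht x hx
    have h2 : HasFDerivAt φ
        ((fderiv ℝ φ (t • y)).comp (t • ContinuousLinearMap.id ℝ (EuclideanSpace ℝ (Fin n)))) y :=
      h1.congr_of_eventuallyEq heq.symm
    rw [h2.fderiv]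
    simp [mul_comm]
  -- Euler relation
  have heuler : ∀ y : EuclideanSpace ℝ (Fin n), y ≠ 0 → fderiv ℝ φ y y = 0 := by
    intro y hy
    have hγ : HasDerivAt (fun t : ℝ => t • y) y 1 := by
      simpa using (hasDerivAt_id (1 : ℝ)).smul_const y
    have h1 : HasDerivAt (fun t : ℝ => φ (t • y)) (fderiv ℝ φ y y) 1 := by
      have hfd : HasFDerivAt φ (fderiv ℝ φ ((1 : ℝ) • y)) ((1 : ℝ) • y) :=
        (hdiff _ (by simpa using hy)).hasFDerivAt
      have := hfd.comp_hasDerivAt 1 hγ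
      simpa [Function.comp_def] using this
    have h2 : (fun t : ℝ => φ (t • y)) =ᶠ[nhds (1 : ℝ)] fun _ => φ y := by
      filter_upwards [eventually_gt_nhds zero_lt_one] with t ht
      exact hφhom t ht y hy
    have h3 : HasDerivAt (fun _ : ℝ => φ y) (fderiv ℝ φ y y) 1 :=
      h1.congr_of_eventuallyEq h2.symm
    exact h3.unique (hasDerivAt_const 1 (φ y))
  -- continuity of the gradient away from 0
  have hgradcont : ContinuousOn (fun y => gradient φ y) ({0}ᶜ : Set (EuclideanSpace ℝ (Fin n))) := by
    have h1 : ContinuousOn (fderiv ℝ φ) ({0}ᶜ : Set (EuclideanSpace ℝ (Fin n))) :=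
      hφ.continuousOn_fderiv_of_isOpen hopen le_rfl
    exact (InnerProductSpace.toDual ℝ (EuclideanSpace ℝ (Fin n))).symm.continuous.comp_continuousOn h1
  -- bound on the sphere
  obtain ⟨M, hM⟩ : ∃ M, ∀ y ∈ Metric.sphere (0 : EuclideanSpace ℝ (Fin n)) 1,
      ‖gradient φ y‖ ≤ M := by
    refine (isCompact_sphere 0 1).exists_bound_of_continuousOn (hgradcont.mono ?_)
    intro y hy
    simp only [mem_sphere_zero_iff_norm] at hy
    simp only [mem_compl_iff, mem_singleton_iff]
    intro h; rw [h] at hy; simp at hy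
  have hM0 : 0 ≤ M := le_trans (norm_nonneg _) (hM ω (by simpa using hω))
  -- bound for the gradient everywhere
  have hgradbound : ∀ y : EuclideanSpace ℝ (Fin n), y ≠ 0 → ‖gradient φ y‖ ≤ M / ‖y‖ := by
    intro y hy
    have hny : (0 : ℝ) < ‖y‖ := norm_pos_iff.mpr hy
    have hu : ‖(‖y‖⁻¹ • y : EuclideanSpace ℝ (Fin n))‖ = 1 := by
      rw [norm_smul, norm_inv, norm_norm, inv_mul_cancel₀ hny.ne']
    have hgrad_eq : gradient φ y = ‖y‖⁻¹ • gradient φ (‖y‖⁻¹ • y) := by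
      apply ext_inner_right ℝ
      intro v
      rw [real_inner_smul_left, hinner, hinner]
      exact hscale y hy ‖y‖⁻¹ (by positivity) v
    rw [hgrad_eq, norm_smul, norm_inv, norm_norm, div_eq_inv_mul]
    gcongr
    exact hM _ (by simpa using hu)
  -- the curve
  have hnorm_c : ∀ s : ℝ, ‖x₀ + s • ω‖ ^ 2 = ‖x₀‖ ^ 2 + s ^ 2 := by
    intro s
    rw [norm_add_sq_real, real_inner_smul_right, hperp, norm_smul]
    simp [hω]
  have hc_ne : ∀ s : ℝ, x₀ + s • ω ≠ 0 := by
    intro s h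
    have h2 := hnorm_c s
    rw [h] at h2
    simp only [norm_zero] at h2
    have hx : (0 : ℝ) < ‖x₀‖ := norm_pos_iff.mpr hx₀
    nlinarith
  have hc_ge : ∀ s : ℝ, |s| ≤ ‖x₀ + s • ω‖ := by
    intro s
    have h2 : s ^ 2 ≤ ‖x₀ + s • ω‖ ^ 2 := by
      rw [hnorm_c]; nlinarith [sq_nonneg ‖x₀‖]
    have := Real.sqrt_le_sqrt h2
    rwa [Real.sqrt_sq_eq_abs, Real.sqrt_sq (norm_nonneg _)] at this
  -- Euler relation along the curve, and the resulting bound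
  have hf_eq : ∀ s : ℝ, s ≠ 0 →
      ⟪gradient φ (x₀ + s • ω), ω⟫ = -⟪gradient φ (x₀ + s • ω), x₀⟫ / s := by
    intro s hs
    have h0 : ⟪gradient φ (x₀ + s • ω), x₀ + s • ω⟫ = 0 := by
      rw [hinner]; exact heuler _ (hc_ne s)
    rw [inner_add_right, real_inner_smul_right] at h0
    rw [eq_div_iff hs]
    linear_combination h0
  have hf_bound : ∀ s : ℝ, s ≠ 0 →
      |⟪gradient φ (x₀ + s • ω), ω⟫| ≤ M * ‖x₀‖ / s ^ 2 := by
    intro s hs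
    have hs' : (0 : ℝ) < |s| := abs_pos.mpr hs
    rw [hf_eq s hs, abs_div, abs_neg]
    have h1 : |⟪gradient φ (x₀ + s • ω), x₀⟫| ≤ M / ‖x₀ + s • ω‖ * ‖x₀‖ := by
      refine (abs_real_inner_le_norm _ _).trans ?_
      gcongr
      exact hgradbound _ (hc_ne s)
    have h2 : M / ‖x₀ + s • ω‖ ≤ M / |s| := by
      gcongr
      exact hc_ge s
    have h3 : |⟪gradient φ (x₀ + s • ω), x₀⟫| ≤ M / |s| * ‖x₀‖ :=
      h1.trans (by gcongr)
    calc |⟪gradient φ (x₀ + s • ω), x₀⟫| / |s| ≤ (M / |s| * ‖x₀‖) / |s| := by gcongr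
      _ = M * ‖x₀‖ / s ^ 2 := by
          rw [div_mul_eq_mul_div, div_div, ← sq, sq_abs]
  -- continuity of the integrand
  have hcc : Continuous (fun s : ℝ => x₀ + s • ω) :=
    continuous_const.add (continuous_id.smul continuous_const)
  have hf_cont : Continuous (fun s : ℝ => ⟪gradient φ (x₀ + s • ω), ω⟫) := by
    have h1 : Continuous (fun s : ℝ => gradient φ (x₀ + s • ω)) := by
      rw [← continuousOn_univ]
      exact hgradcont.comp hcc.continuousOn (fun s _ => hc_ne s)
    exact h1.inner continuous_const
  -- integrability
  have hrpow : ∀ s : ℝ, 0 < s → s ^ (-2 : ℝ) = (s ^ 2)⁻¹ := by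
    intro s hs
    rw [Real.rpow_neg hs.le, show (2 : ℝ) = ((2 : ℕ) : ℝ) by norm_num, Real.rpow_natCast]
  have hgIoi : IntegrableOn (fun s : ℝ => M * ‖x₀‖ * s ^ (-2 : ℝ)) (Ioi (1 : ℝ)) :=
    (integrableOn_Ioi_rpow_of_lt (by norm_num) one_pos).const_mul _
  have hIoi : IntegrableOn (fun s : ℝ => ⟪gradient φ (x₀ + s • ω), ω⟫) (Ioi (1 : ℝ)) := by
    refine Integrable.mono' hgIoi hf_cont.aestronglyMeasurable.restrict ?_
    rw [ae_restrict_iff' measurableSet_Ioi]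
    filter_upwards with s hs
    have hs0 : (0 : ℝ) < s := lt_trans one_pos hs
    rw [Real.norm_eq_abs, hrpow s hs0]
    calc |⟪gradient φ (x₀ + s • ω), ω⟫| ≤ M * ‖x₀‖ / s ^ 2 := hf_bound s hs0.ne'
      _ = M * ‖x₀‖ * (s ^ 2)⁻¹ := by rw [div_eq_mul_inv]
  have hIio : IntegrableOn (fun s : ℝ => ⟪gradient φ (x₀ + s • ω), ω⟫) (Iio (-1 : ℝ)) := by
    have hgneg : Integrable
        (fun s : ℝ => (Ioi (1 : ℝ)).indicator (fun t : ℝ => M * ‖x₀‖ * t ^ (-2 : ℝ)) (-s)) :=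
      ((integrable_indicator_iff measurableSet_Ioi).mpr hgIoi).comp_neg
    have hind : (fun s : ℝ =>
        (Ioi (1 : ℝ)).indicator (fun t : ℝ => M * ‖x₀‖ * t ^ (-2 : ℝ)) (-s)) =
        (Iio (-1 : ℝ)).indicator (fun s : ℝ => M * ‖x₀‖ * (-s) ^ (-2 : ℝ)) := by
      funext s
      simp only [Set.indicator_apply, mem_Ioi, mem_Iio]
      by_cases h : s < -1
      · rw [if_pos (by linarith), if_pos h]
      · rw [if_neg (by linarith), if_neg h]
    rw [hind] at hgneg
    have hgIio : IntegrableOn (fun s : ℝ => M * ‖x₀‖ * (-s) ^ (-2 : ℝ)) (Iio (-1 : ℝ)) :=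
      (integrable_indicator_iff measurableSet_Iio).mp hgneg
    refine Integrable.mono' hgIio hf_cont.aestronglyMeasurable.restrict ?_
    rw [ae_restrict_iff' measurableSet_Iio]
    filter_upwards with s hs
    have hs0 : s < 0 := lt_trans hs (by norm_num)
    rw [Real.norm_eq_abs, hrpow (-s) (by linarith), neg_sq]
    calc |⟪gradient φ (x₀ + s • ω), ω⟫| ≤ M * ‖x₀‖ / s ^ 2 := hf_bound s hs0.ne
      _ = M * ‖x₀‖ * (s ^ 2)⁻¹ := by rw [div_eq_mul_inv]
  have hIcc : IntegrableOn (fun s : ℝ => ⟪gradient φ (x₀ + s • ω), ω⟫) (Icc (-1 : ℝ) 1) :=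
    hf_cont.continuousOn.integrableOn_Icc
  have hInt : Integrable (fun s : ℝ => ⟪gradient φ (x₀ + s • ω), ω⟫) := by
    rw [← integrableOn_univ]
    refine ((hIio.union hIcc).union hIoi).mono_set ?_
    intro s _
    by_cases h1 : s < -1
    · exact Or.inl (Or.inl h1)
    · by_cases h2 : s ≤ 1
      · exact Or.inl (Or.inr ⟨by linarith, h2⟩)
      · exact Or.inr (by simpa using by linarith : s ∈ Ioi (1:ℝ))
  -- derivative of φ along the line
  have hg_deriv : ∀ s : ℝ, HasDerivAt (fun s : ℝ => φ (x₀ + s • ω))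
      (⟪gradient φ (x₀ + s • ω), ω⟫) s := by
    intro s
    have hcd : HasDerivAt (fun s : ℝ => x₀ + s • ω) ω s := by
      simpa using ((hasDerivAt_id s).smul_const ω).const_add x₀
    have h1 := (hdiff _ (hc_ne s)).hasFDerivAt.comp_hasDerivAt s hcd
    rw [hinner]
    exact h1
  have hω0 : ω ≠ 0 := fun h => by rw [h] at hω; simp at hω
  have hω0' : -ω ≠ 0 := neg_ne_zero.mpr hω0
  -- limit at +∞
  have htop : Tendsto (fun s : ℝ => φ (x₀ + s • ω)) atTop (nhds (φ ω)) := by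
    have h1 : Tendsto (fun s : ℝ => s⁻¹ • x₀ + ω) atTop (nhds ω) := by
      have h0 := tendsto_inv_atTop_zero.smul_const (M := ℝ) x₀
      simpa using h0.add_const ω
    have h2 : Tendsto (fun s : ℝ => φ (s⁻¹ • x₀ + ω)) atTop (nhds (φ ω)) :=
      ((hdiff ω hω0).continuousAt.tendsto).comp h1
    refine h2.congr' ?_
    filter_upwards [eventually_gt_atTop (0 : ℝ)] with s hs
    have hxne : s⁻¹ • x₀ + ω ≠ 0 := by
      intro h
      have h3 : ⟪s⁻¹ • x₀ + ω, ω⟫ = 0 := by rw [h]; simp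
      rw [inner_add_left, real_inner_smul_left, hperp, real_inner_self_eq_norm_sq, hω] at h3
      norm_num at h3
    have h4 := hφhom s hs _ hxne
    rw [smul_add, smul_smul, mul_inv_cancel₀ hs.ne', one_smul] at h4
    exact h4.symm
  -- limit at -∞
  have hbot : Tendsto (fun s : ℝ => φ (x₀ + s • ω)) atBot (nhds (φ (-ω))) := by
    have h1 : Tendsto (fun s : ℝ => (-s)⁻¹ • x₀ + -ω) atBot (nhds (-ω)) := by
      have h0 : Tendsto (fun s : ℝ => (-s)⁻¹) atBot (nhds 0) := by
        have hneg : Tendsto (fun s : ℝ => -s) atBot atTop := tendsto_neg_atBot_atTop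
        have := tendsto_inv_atTop_zero.comp hneg
        simpa [Function.comp_def] using this
      have h1' := (h0.smul_const x₀).add_const (-ω)
      rw [zero_smul, zero_add] at h1'
      exact h1'
    have h2 : Tendsto (fun s : ℝ => φ ((-s)⁻¹ • x₀ + -ω)) atBot (nhds (φ (-ω))) :=
      ((hdiff _ hω0').continuousAt.tendsto).comp h1
    refine h2.congr' ?_
    filter_upwards [eventually_lt_atBot (0 : ℝ)] with s hs
    have hns : (0 : ℝ) < -s := by linarith
    have hxne : (-s)⁻¹ • x₀ + -ω ≠ 0 := by
      intro h
      have h3 : ⟪(-s)⁻¹ • x₀ + -ω, ω⟫ = 0 := by rw [h]; simp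
      rw [inner_add_left, real_inner_smul_left, hperp, inner_neg_left,
        real_inner_self_eq_norm_sq, hω] at h3
      norm_num at h3
    have h4 := hφhom (-s) hns _ hxne
    rw [smul_add, smul_smul, mul_inv_cancel₀ hns.ne', one_smul, smul_neg, neg_smul,
      neg_neg] at h4
    exact h4.symm
  refine ⟨hInt, ?_⟩
  have hI1 : ∫ s in Ioi (0 : ℝ), ⟪gradient φ (x₀ + s • ω), ω⟫ = φ ω - φ (x₀ + (0 : ℝ) • ω) :=
    integral_Ioi_of_hasDerivAt_of_tendsto' (fun s _ => hg_deriv s) hInt.integrableOn htop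
  have hI2 : ∫ s in Iic (0 : ℝ), ⟪gradient φ (x₀ + s • ω), ω⟫ = φ (x₀ + (0 : ℝ) • ω) - φ (-ω) :=
    integral_Iic_of_hasDerivAt_of_tendsto' (fun s _ => hg_deriv s) hInt.integrableOn hbot
  rw [← intervalIntegral.integral_Iic_add_Ioi hInt.integrableOn hInt.integrableOn, hI1, hI2]
  ring
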